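/- Existence of a diagonal bump function: let M be a smooth m-dimensional manifold without boundary and let U ⊆ M be an open set contained in the source of some chart of M. Then there exists a smooth function F : M × U → ℝ (where U carries its induced smooth manifold structure and M × U the product structure) such that F(s, s) = 1 for every s ∈ U, and the closed support of F is contained in { (s, t) ∈ M × U : s ∈ U } (in particular F(s, t) = 0, and F vanishes on a neighborhood of (s, t), whenever s ∉ U). -/

import Mathlib

open TopologicalSpace
open scoped Manifold

/-- Existence of a diagonal bump function: if `U` is an open subset of a smooth
`m`-manifold `M` contained in the source of a chart, then there is a smooth
function `F : M × U → ℝ` with `F(s,s) = 1` for `s ∈ U` whose closed support is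
contained in `{(s,t) : s ∈ U}`. -/
theorem exists_diagonal_bump (m : ℕ) (M : Type*) [TopologicalSpace M] [T2Space M]
    [ChartedSpace (EuclideanSpace ℝ (Fin m)) M]
    [IsManifold (𝓘(ℝ, EuclideanSpace ℝ (Fin m))) (⊤ : ℕ∞) M]
    (U : Opens M)
    (hU : ∃ e ∈ atlas (EuclideanSpace ℝ (Fin m)) M, (U : Set M) ⊆ e.source) :
    ∃ F : M × U → ℝ,
      ContMDiff ((𝓘(ℝ, EuclideanSpace ℝ (Fin m))).prod
          (𝓘(ℝ, EuclideanSpace ℝ (Fin m)))) 𝓘(ℝ, ℝ) (⊤ : ℕ∞) F ∧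
      (∀ t : U, F ((t : M), t) = 1) ∧
      tsupport F ⊆ {p : M × U | (p.1 : M) ∈ (U : Set M)} := by
  classical
  obtain ⟨e, he, heU⟩ := hU
  have hVo : IsOpen (e '' (U : Set M)) := e.isOpen_image_of_subset_source U.isOpen heU
  obtain ⟨ψ, hψsupp, hψsmooth, hψrange⟩ := hVo.exists_contDiff_support_eq (n := ⊤)
  have hψ0 : ∀ x, 0 ≤ ψ x := fun x => (hψrange (Set.mem_range_self x)).1
  set χ : ContDiffBump (0 : EuclideanSpace ℝ (Fin m)) :=
    ⟨1/2, 1, by norm_num, by norm_num⟩ with hχ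
  set A : Set (M × U) := {p | (p.1 : M) ∈ e.source} with hA
  have hAo : IsOpen A := e.open_source.preimage continuous_fst
  set g : M × U → ℝ := fun p =>
    Real.smoothTransition (2 * (ψ (e p.1) / ψ (e ((p.2 : M)))) - 1)
      * χ (e p.1 - e ((p.2 : M))) with hg
  set F : M × U → ℝ := A.indicator g with hF
  have hψpos : ∀ t : U, 0 < ψ (e ((t : M))) := by
    intro t
    have h1 : e ((t : M)) ∈ Function.support ψ := by
      rw [hψsupp]; exact ⟨(t : M), t.2, rfl⟩
    exact lt_of_le_of_ne (hψ0 _) (Ne.symm h1)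
  -- characterization of the support of F
  have hsupp : ∀ p : M × U, F p ≠ 0 →
      (p.1 : M) ∈ e.source ∧ ψ (e ((p.2 : M))) / 2 < ψ (e p.1) ∧
        dist (e p.1) (e ((p.2 : M))) < 1 := by
    intro p hp
    have hpA : p ∈ A := by
      by_contra h
      exact hp (Set.indicator_of_notMem h g)
    have hgp : g p ≠ 0 := by
      rw [hF, Set.indicator_of_mem hpA] at hp; exact hp
    rw [hg] at hgp
    obtain ⟨h1, h2⟩ := mul_ne_zero_iff.1 hgp
    have hd : 0 < ψ (e ((p.2 : M))) := hψpos p.2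
    refine ⟨hpA, ?_, ?_⟩
    · have h1' : ¬(2 * (ψ (e p.1) / ψ (e ((p.2 : M)))) - 1 ≤ 0) :=
        fun h => h1 (Real.smoothTransition.zero_of_nonpos h)
      push_neg at h1'
      have h1'' : 1 / 2 < ψ (e p.1) / ψ (e ((p.2 : M))) := by linarith
      rw [lt_div_iff₀ hd] at h1''
      linarith
    · have h2' : e p.1 - e ((p.2 : M)) ∈ Function.support (χ : EuclideanSpace ℝ (Fin m) → ℝ) :=
        Function.mem_support.2 h2
      rw [χ.support_eq] at h2'
      have := mem_ball_zero_iff.1 h2'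
      rwa [← dist_eq_norm] at this
  -- the closed support is contained in `{p | p.1 ∈ U}`
  have hclosure : tsupport F ⊆ {p : M × U | (p.1 : M) ∈ (U : Set M)} := by
    intro p hp
    set y := e ((p.2 : M)) with hy
    set a := ψ y with ha'
    have ha : 0 < a := hψpos p.2
    set K : Set (EuclideanSpace ℝ (Fin m)) :=
      {x | a / 4 ≤ ψ x} ∩ Metric.closedBall y 2 with hK
    have hKcl : IsClosed K :=
      (isClosed_le continuous_const hψsmooth.continuous).inter Metric.isClosed_closedBall
    have hKcp : IsCompact K :=
      (isCompact_closedBall y 2).of_isClosed_subset hKcl Set.inter_subset_right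
    have hKV : K ⊆ e '' (U : Set M) := by
      intro x hx
      have hxa : a / 4 ≤ ψ x := hx.1
      have hx1 : x ∈ Function.support ψ := by
        rw [Function.mem_support]
        intro h0
        rw [h0] at hxa
        linarith
      rwa [hψsupp] at hx1
    have hKt : K ⊆ e.target := by
      intro x hx
      obtain ⟨u, hu, rfl⟩ := hKV hx
      exact e.map_source (heU hu)
    have hK'cp : IsCompact (e.symm '' K) :=
      hKcp.image_of_continuousOn (e.continuousOn_symm.mono hKt)
    have hK'U : e.symm '' K ⊆ (U : Set M) := by
      rintro x ⟨k, hk, rfl⟩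
      obtain ⟨u, hu, rfl⟩ := hKV hk
      rwa [e.left_inv (heU hu)]
    by_contra hpU
    have hp1 : (p.1 : M) ∉ e.symm '' K := fun h => hpU (hK'U h)
    set N : Set (M × U) := {q | q.1 ∉ e.symm '' K ∧ a / 2 < ψ (e ((q.2 : M))) ∧
      dist (e ((q.2 : M))) y < 1} with hN
    have hcont : Continuous fun q : M × U => e ((q.2 : M)) :=
      e.continuousOn.comp_continuous (continuous_subtype_val.comp continuous_snd)
        (fun q => heU q.2.2)
    have hNo : IsOpen N := by
      apply IsOpen.inter
      · exact (hK'cp.isClosed.preimage continuous_fst).isOpen_compl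
      · apply IsOpen.inter
        · exact isOpen_lt continuous_const (hψsmooth.continuous.comp hcont)
        · exact isOpen_lt (hcont.dist continuous_const) continuous_const
    have hpN : p ∈ N := by
      refine ⟨hp1, ?_, ?_⟩
      · simp only [← hy, ← ha']; linarith
      · simp [← hy]
    rw [tsupport] at hp
    obtain ⟨q, hqN, hqF⟩ := mem_closure_iff.1 hp N hNo hpN
    obtain ⟨hq1, hq2, hq3⟩ := hsupp q hqF
    obtain ⟨hqK', hqa, hqd⟩ := hqN
    have h4 : a / 4 ≤ ψ (e q.1) := by linarith
    have h5 : dist (e q.1) y ≤ 2 := by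
      have := dist_triangle (e q.1) (e ((q.2 : M))) y
      linarith
    have h6 : e q.1 ∈ K := ⟨h4, Metric.mem_closedBall.2 h5⟩
    exact hqK' ⟨e q.1, h6, e.left_inv hq1⟩
  -- smoothness of g on A
  have hgsmooth : ContMDiffOn
      ((𝓘(ℝ, EuclideanSpace ℝ (Fin m))).prod (𝓘(ℝ, EuclideanSpace ℝ (Fin m)))) 𝓘(ℝ, ℝ) (⊤ : ℕ∞) g A := by
    have hesm : ContMDiffOn (𝓘(ℝ, EuclideanSpace ℝ (Fin m))) (𝓘(ℝ, EuclideanSpace ℝ (Fin m)))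
        (⊤ : ℕ∞) e e.source := contMDiffOn_of_mem_maximalAtlas (IsManifold.subset_maximalAtlas he)
    have h1 : ContMDiffOn ((𝓘(ℝ, EuclideanSpace ℝ (Fin m))).prod
        (𝓘(ℝ, EuclideanSpace ℝ (Fin m)))) (𝓘(ℝ, EuclideanSpace ℝ (Fin m))) (⊤ : ℕ∞)
        (fun p : M × U => e p.1) A :=
      hesm.comp contMDiff_fst.contMDiffOn (fun p hp => hp)
    have h2 : ContMDiffOn ((𝓘(ℝ, EuclideanSpace ℝ (Fin m))).prod
        (𝓘(ℝ, EuclideanSpace ℝ (Fin m)))) (𝓘(ℝ, EuclideanSpace ℝ (Fin m))) (⊤ : ℕ∞)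
        (fun p : M × U => e ((p.2 : M))) A :=
      hesm.comp ((contMDiff_subtype_val.comp contMDiff_snd).contMDiffOn)
        (fun p _ => heU p.2.2)
    have hψm : ContMDiff (𝓘(ℝ, EuclideanSpace ℝ (Fin m))) 𝓘(ℝ, ℝ) (⊤ : ℕ∞) ψ := hψsmooth.contMDiff
    have hq1 := hψm.comp_contMDiffOn h1
    have hq2 := hψm.comp_contMDiffOn h2
    have hdiv : ContMDiffOn ((𝓘(ℝ, EuclideanSpace ℝ (Fin m))).prod
        (𝓘(ℝ, EuclideanSpace ℝ (Fin m)))) 𝓘(ℝ, ℝ) (⊤ : ℕ∞)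
        (fun p : M × U => ψ (e p.1) / ψ (e ((p.2 : M)))) A :=
      hq1.div₀ hq2 (fun p _ => (hψpos p.2).ne')
    have hst : ContMDiffOn ((𝓘(ℝ, EuclideanSpace ℝ (Fin m))).prod
        (𝓘(ℝ, EuclideanSpace ℝ (Fin m)))) 𝓘(ℝ, ℝ) (⊤ : ℕ∞)
        (fun p : M × U => Real.smoothTransition
          (2 * (ψ (e p.1) / ψ (e ((p.2 : M)))) - 1)) A :=
      (Real.smoothTransition.contDiff.contMDiff).comp_contMDiffOn
        ((contMDiffOn_const.mul hdiv).sub contMDiffOn_const)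
    have hbump : ContMDiffOn ((𝓘(ℝ, EuclideanSpace ℝ (Fin m))).prod
        (𝓘(ℝ, EuclideanSpace ℝ (Fin m)))) 𝓘(ℝ, ℝ) (⊤ : ℕ∞)
        (fun p : M × U => χ (e p.1 - e ((p.2 : M)))) A :=
      (χ.contDiff.contMDiff).comp_contMDiffOn (h1.sub h2)
    exact hst.mul hbump
  refine ⟨F, ?_, ?_, hclosure⟩
  · intro p
    by_cases hpA : p ∈ A
    · refine ((hgsmooth p hpA).contMDiffAt (hAo.mem_nhds hpA)).congr_of_eventuallyEq ?_
      filter_upwards [hAo.mem_nhds hpA] with q hq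
      rw [hF, Set.indicator_of_mem hq]
    · have hpT : p ∉ tsupport F := by
        intro h
        exact hpA (heU (hclosure h))
      exact contMDiffAt_of_notMem hpT (⊤ : ℕ∞)
  · intro t
    have hmem : (((t : M), t) : M × U) ∈ A := heU t.2
    rw [hF, Set.indicator_of_mem hmem]
    show Real.smoothTransition (2 * (ψ (e ((t : M))) / ψ (e ((t : M)))) - 1)
        * χ (e ((t : M)) - e ((t : M))) = 1
    rw [div_self (hψpos t).ne', sub_self,
      χ.one_of_mem_closedBall (Metric.mem_closedBall_self χ.rIn_pos.le)]
    norm_num [Real.smoothTransition.one]
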